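/- arXiv:1409.8391 — 3 statements merged into one kernel-verified Lean document; each statement's English description precedes it below -/
import Mathlib

section
/- Let n ≥ 0 and r be integers with r ≡ n (mod 2). For all real numbers a > 0, d > 0, x ∈ ℝ, and every real 2×2 matrix g with det g > 0, one has φ^n_r(b·g) = a^{n+1} d^{−1} φ^n_r(g), where b = ((a, x), (0, d)). That is, φ^n_r lies in the space of functions on GL₂(ℝ)⁺ transforming under the identity component of the upper-triangular Borel subgroup by the character λ(n+2, n). -/
open Matrix

noncomputable section

/-- z(g) = (ai + b)/(ci + d) for g = ((a,b),(c,d)). -/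
def zg (g : Matrix (Fin 2) (Fin 2) ℝ) : ℂ :=
  ((g 0 0 : ℂ) * Complex.I + (g 0 1 : ℂ)) / ((g 1 0 : ℂ) * Complex.I + (g 1 1 : ℂ))

/-- w(g) = ci + d for g = ((a,b),(c,d)). -/
def wg (g : Matrix (Fin 2) (Fin 2) ℝ) : ℂ :=
  (g 1 0 : ℂ) * Complex.I + (g 1 1 : ℂ)

/-- φ^n_r(g) = (z(g) − conj z(g))^{n+1} · w(g)^{(n−r)/2} · (conj w(g))^{(n+r)/2}. -/
def phi (n : ℕ) (r : ℤ) (g : Matrix (Fin 2) (Fin 2) ℝ) : ℂ :=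
  (zg g - (starRingEnd ℂ) (zg g)) ^ (n + 1) *
    wg g ^ (((n : ℤ) - r) / 2) * ((starRingEnd ℂ) (wg g)) ^ (((n : ℤ) + r) / 2)

lemma wg_ne_zero (g : Matrix (Fin 2) (Fin 2) ℝ) (hg : 0 < g.det) : wg g ≠ 0 := by
  intro h
  have h1 : (g 1 0 : ℝ) = 0 ∧ (g 1 1 : ℝ) = 0 := by
    have hre := congrArg Complex.re h
    have him := congrArg Complex.im h
    simp [wg] at hre him
    exact ⟨him, hre⟩
  rw [Matrix.det_fin_two] at hg
  rw [h1.1, h1.2] at hg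
  simp at hg

/-- φ^n_r transforms under the identity component of the Borel by λ(n+2, n):
φ^n_r(((a,x),(0,d))·g) = a^{n+1} d^{−1} φ^n_r(g) for a, d > 0. -/
theorem stmt8 (n : ℕ) (r : ℤ) (hr : (2 : ℤ) ∣ ((n : ℤ) - r))
    (a d x : ℝ) (ha : 0 < a) (hd : 0 < d)
    (g : Matrix (Fin 2) (Fin 2) ℝ) (hg : 0 < g.det) :
    phi n r (!![a, x; 0, d] * g) = (a : ℂ) ^ (n + 1) * (d : ℂ)⁻¹ * phi n r g := by
  have hw : wg g ≠ 0 := wg_ne_zero g hg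
  have hdC : (d : ℂ) ≠ 0 := by exact_mod_cast hd.ne'
  have hwmul : wg (!![a, x; 0, d] * g) = (d : ℂ) * wg g := by
    simp [wg, Matrix.mul_apply, Fin.sum_univ_two]
    push_cast
    ring
  have hzmul : zg (!![a, x; 0, d] * g) = ((a : ℂ) * zg g + x) / d := by
    rw [zg, zg]
    have hnum : ((((!![a, x; 0, d] * g) 0 0 : ℝ)) : ℂ) * Complex.I
        + (((!![a, x; 0, d] * g) 0 1 : ℝ) : ℂ)
        = (a : ℂ) * ((g 0 0 : ℂ) * Complex.I + (g 0 1 : ℂ)) + (x : ℂ) * wg g := by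
      simp only [wg, Matrix.mul_apply, Fin.sum_univ_two, Matrix.cons_val', Matrix.cons_val_zero,
        Matrix.cons_val_one, Matrix.head_cons, Matrix.empty_val', Matrix.cons_val_fin_one,
        Matrix.head_fin_const, Matrix.of_apply]
      push_cast
      ring
    rw [show (((!![a, x; 0, d] * g) 1 0 : ℝ) : ℂ) * Complex.I
        + (((!![a, x; 0, d] * g) 1 1 : ℝ) : ℂ) = wg (!![a, x; 0, d] * g) from rfl,
      hnum, hwmul]
    rw [show ((g 1 0 : ℂ) * Complex.I + (g 1 1 : ℂ)) = wg g from rfl]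
    rw [div_eq_div_iff (mul_ne_zero hdC hw) hdC]
    field_simp
  have hpq : ((n : ℤ) - r) / 2 + ((n : ℤ) + r) / 2 = n := by omega
  have hz' : zg (!![a, x; 0, d] * g) - (starRingEnd ℂ) (zg (!![a, x; 0, d] * g))
      = (a : ℂ) / d * (zg g - (starRingEnd ℂ) (zg g)) := by
    rw [hzmul]
    rw [map_div₀, map_add, _root_.map_mul, Complex.conj_ofReal, Complex.conj_ofReal,
      Complex.conj_ofReal]
    field_simp
    ring
  rw [phi, phi, hz', hwmul, _root_.map_mul, Complex.conj_ofReal]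
  rw [mul_zpow, mul_zpow, mul_pow, div_pow]
  have hcw : (starRingEnd ℂ) (wg g) ≠ 0 := by simpa using hw
  have hd1 : (d : ℂ) ^ (((n : ℤ) - r) / 2) * (d : ℂ) ^ (((n : ℤ) + r) / 2)
      = (d : ℂ) ^ (n : ℤ) := by
    rw [← zpow_add₀ hdC, hpq]
  rw [zpow_natCast] at hd1
  field_simp
  linear_combination ((a : ℂ) ^ (n + 1) * (zg g - (starRingEnd ℂ) (zg g)) ^ (n + 1) *
    (d : ℂ)) * hd1
end
end

section
/- Let p be a prime, let η : (ℚ_p, +) → ℂ^× be a group homomorphism, and let W : GL₄(ℚ_p) → ℂ be a function. For r, s, t ∈ ℚ_p let u(r,s,t) = I₄ + r·E₁₃ + t·E₁₄ + t·E₂₃ + s·E₂₄. Assume: (i) W(u(r,s,t)·g) = η(t)·W(g) for all r, s, t ∈ ℚ_p and all g ∈ GL₄(ℚ_p); (ii) W(g·(I₄ + E₁₄ + E₂₃)) = W(g) for all g ∈ GL₄(ℚ_p). Then for every x ∈ ℚ_p^× with η(x) ≠ 1 one has W(diag(x, x, 1, 1)) = 0. In particular, if η is trivial on ℤ_p and η(p^{−m})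 ≠ 1 for all integers m ≥ 1, then W(diag(p^{−m}, p^{−m}, 1, 1)) = 0 for all m ≥ 1. -/
open Matrix

noncomputable section

/-- u(r,s,t) = I₄ + r·E₁₃ + t·E₁₄ + t·E₂₃ + s·E₂₄, an element of the unipotent
radical of the Siegel parabolic. -/
def u {p : ℕ} [Fact p.Prime] (r s t : ℚ_[p]) : Matrix (Fin 4) (Fin 4) ℚ_[p] :=
  !![1, 0, r, t; 0, 1, t, s; 0, 0, 1, 0; 0, 0, 0, 1]

theorem stmt10 (p : ℕ) [Fact p.Prime] (η : ℚ_[p] → ℂˣ)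
    (hη : ∀ a b : ℚ_[p], η (a + b) = η a * η b)
    (W : Matrix (Fin 4) (Fin 4) ℚ_[p] → ℂ)
    (h1 : ∀ (r s t : ℚ_[p]) (g : Matrix (Fin 4) (Fin 4) ℚ_[p]), IsUnit g.det →
      W (u r s t * g) = (η t : ℂ) * W g)
    (h2 : ∀ g : Matrix (Fin 4) (Fin 4) ℚ_[p], IsUnit g.det →
      W (g * u 0 0 1) = W g) :
    (∀ x : ℚ_[p], x ≠ 0 → η x ≠ 1 →
      W (Matrix.diagonal ![x, x, 1, 1]) = 0) ∧
    ((∀ a : ℚ_[p], ‖a‖ ≤ 1 → η a = 1) →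
      (∀ m : ℕ, 1 ≤ m → η ((p : ℚ_[p]) ^ (-(m : ℤ))) ≠ 1) →
      ∀ m : ℕ, 1 ≤ m →
        W (Matrix.diagonal
          ![(p : ℚ_[p]) ^ (-(m : ℤ)), (p : ℚ_[p]) ^ (-(m : ℤ)), 1, 1]) = 0) := by
  have main : ∀ x : ℚ_[p], x ≠ 0 → η x ≠ 1 →
      W (Matrix.diagonal ![x, x, 1, 1]) = 0 := by
    intro x hx hηx
    set d : Matrix (Fin 4) (Fin 4) ℚ_[p] := Matrix.diagonal ![x, x, 1, 1] with hd
    have hdet : IsUnit d.det := by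
      have : d.det = x * x := by
        simp [hd, Matrix.det_diagonal, Fin.prod_univ_four]
      rw [this]
      exact (isUnit_iff_ne_zero.mpr hx).mul (isUnit_iff_ne_zero.mpr hx)
    have hcomm : d * u 0 0 1 = u 0 0 x * d := by
      ext i j
      fin_cases i <;> fin_cases j <;>
        simp [hd, u, Matrix.mul_apply, Fin.sum_univ_four, Matrix.diagonal, Matrix.vecHead, Matrix.vecTail]
    have e1 : W d = W (u 0 0 x * d) := by
      rw [← hcomm, h2 d hdet]
    have e2 : W (u 0 0 x * d) = (η x : ℂ) * W d := h1 0 0 x d hdet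
    have key : W d = (η x : ℂ) * W d := e1.trans e2
    have hne : (η x : ℂ) ≠ 1 := by
      intro h
      exact hηx (Units.ext (by simpa using h))
    have : ((η x : ℂ) - 1) * W d = 0 := by ring_nf; linear_combination -key
    rcases mul_eq_zero.mp this with h | h
    · exact absurd (sub_eq_zero.mp h) hne
    · exact h
  refine ⟨main, ?_⟩
  intro _ hne m hm
  have hx : ((p : ℚ_[p]) ^ (-(m : ℤ))) ≠ 0 := by
    apply zpow_ne_zero
    exact_mod_cast (Fact.out : p.Prime).ne_zero
  exact main _ hx (hne m hm)
end
end

section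
/- Let V be a complex vector space and ρ a group homomorphism from GL₄(ℂ) to the group of linear automorphisms of V. Let u, u', m be integers and w ∈ V a vector such that ρ(diag(α₁, α₂, α₁⁻¹ν, α₂⁻¹ν))·w = α₁^u · α₂^{u'} · ν^m · w for all α₁, α₂, ν ∈ ℂ^×. Let J = (1/√2)·(I₄ + i(E₁₃ + E₂₄ + E₃₁ + E₄₂)), let N be the matrix with rows (0,−1,0,0), (−1,0,0,0), (0,0,0,1), (0,0,1,0), and for real x, y, x', y' let R(x,y,x',y') be the matrix with rows (x,0,y,0), (0,x',0,y'), (−y,0,x,0), (0,−y',0,x'). Set v = ρ(J)w and v̄ = ρ(N)v. Then for all real x, y, x', y' with x² + y² = x'² + y'² = 1: ρ(R(x,y,x',y'))·v = (x+iy)^u (x'+iy')^{u'} · v and ρ(R(x,y,x',y'))·v̄ = (x+iy)^{−u'} (x'+iy')^{−u} · v̄; moreover for every λ > 0, ρ(λ·I₄)·v = λ^{u+u'+2m}·v and ρ(λ·I₄)·v̄ = λ^{u+u'+2m}·v̄. That is, if w has weight λ(u,u',c) for the diagonal torus (with c = u+u'+2m), then v has weight λ'(u,u',c) and v̄ has weight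 λ'(−u',−u,c) for the compact torus A_G T'. -/
open Matrix

noncomputable section

/-- The Cayley element J = (1/√2)(I₄ + i(E₁₃ + E₂₄ + E₃₁ + E₄₂)). -/
def Jmat : Matrix (Fin 4) (Fin 4) ℂ :=
  ((Real.sqrt 2 : ℂ))⁻¹ •
    (1 + Complex.I • (Matrix.single 0 2 1 + Matrix.single 1 3 1 +
      Matrix.single 2 0 1 + Matrix.single 3 1 1))

/-- The element N implementing complex conjugation. -/
def Nmat : Matrix (Fin 4) (Fin 4) ℂ :=
  !![0, -1, 0, 0; -1, 0, 0, 0; 0, 0, 0, 1; 0, 0, 1, 0]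

/-- R(x,y,x',y'): element of the compact torus T'. -/
def Rmat (x y x' y' : ℂ) : Matrix (Fin 4) (Fin 4) ℂ :=
  !![x, 0, y, 0; 0, x', 0, y'; -y, 0, x, 0; 0, -y', 0, x']

lemma RJ_eq (x y x' y' : ℂ) : Rmat x y x' y' * Jmat =
    Jmat * Matrix.diagonal ![x + Complex.I*y, x'+Complex.I*y', x - Complex.I*y, x' - Complex.I*y'] := by
  ext i j
  fin_cases i <;> fin_cases j <;>
    simp [Rmat, Jmat, Matrix.mul_apply, Fin.sum_univ_four, Matrix.single,
      Matrix.one_apply, Matrix.diagonal] <;> ring_nf <;> simp [Complex.I_sq] <;> ring_nf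

lemma RN_eq (x y x' y' : ℂ) : Rmat x y x' y' * Nmat = Nmat * Rmat x' (-y') x (-y) := by
  ext i j
  fin_cases i <;> fin_cases j <;>
    simp [Rmat, Nmat, Matrix.mul_apply, Fin.sum_univ_four, Matrix.vecHead, Matrix.vecTail]

theorem stmt13 (V : Type*) [AddCommGroup V] [Module ℂ V]
    (ρ : GL (Fin 4) ℂ →* (V →ₗ[ℂ] V)ˣ)
    (u u' m : ℤ) (w : V)
    (hw : ∀ (α₁ α₂ ν : ℂ) (g : GL (Fin 4) ℂ),
      (g : Matrix (Fin 4) (Fin 4) ℂ) = Matrix.diagonal ![α₁, α₂, α₁⁻¹ * ν, α₂⁻¹ * ν] →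
      (ρ g : V →ₗ[ℂ] V) w = (α₁ ^ u * α₂ ^ u' * ν ^ m) • w)
    (gJ gN : GL (Fin 4) ℂ)
    (hgJ : (gJ : Matrix (Fin 4) (Fin 4) ℂ) = Jmat)
    (hgN : (gN : Matrix (Fin 4) (Fin 4) ℂ) = Nmat)
    (v vbar : V)
    (hv : v = (ρ gJ : V →ₗ[ℂ] V) w)
    (hvbar : vbar = (ρ gN : V →ₗ[ℂ] V) v) :
    (∀ (x y x' y' : ℝ), x ^ 2 + y ^ 2 = 1 → x' ^ 2 + y' ^ 2 = 1 →
      ∀ g : GL (Fin 4) ℂ,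
        (g : Matrix (Fin 4) (Fin 4) ℂ) = Rmat (x : ℂ) (y : ℂ) (x' : ℂ) (y' : ℂ) →
        (ρ g : V →ₗ[ℂ] V) v =
          (((x : ℂ) + Complex.I * y) ^ u * ((x' : ℂ) + Complex.I * y') ^ u') • v ∧
        (ρ g : V →ₗ[ℂ] V) vbar =
          (((x : ℂ) + Complex.I * y) ^ (-u') * ((x' : ℂ) + Complex.I * y') ^ (-u)) • vbar) ∧
    (∀ lam : ℝ, 0 < lam →
      ∀ g : GL (Fin 4) ℂ,
        (g : Matrix (Fin 4) (Fin 4) ℂ) = (lam : ℂ) • (1 : Matrix (Fin 4) (Fin 4) ℂ) →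
        (ρ g : V →ₗ[ℂ] V) v = ((lam : ℂ) ^ (u + u' + 2 * m)) • v ∧
        (ρ g : V →ₗ[ℂ] V) vbar = ((lam : ℂ) ^ (u + u' + 2 * m)) • vbar) := by
  -- main claim for v
  have claim1 : ∀ (x y x' y' : ℝ), x ^ 2 + y ^ 2 = 1 → x' ^ 2 + y' ^ 2 = 1 →
      ∀ g : GL (Fin 4) ℂ,
        (g : Matrix (Fin 4) (Fin 4) ℂ) = Rmat (x : ℂ) (y : ℂ) (x' : ℂ) (y' : ℂ) →
        (ρ g : V →ₗ[ℂ] V) v =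
          (((x : ℂ) + Complex.I * y) ^ u * ((x' : ℂ) + Complex.I * y') ^ u') • v := by
    intro x y x' y' hxy hxy' g hg
    set α₁ : ℂ := (x : ℂ) + Complex.I * y with hα₁
    set α₂ : ℂ := (x' : ℂ) + Complex.I * y' with hα₂
    have hc : (x : ℂ) ^ 2 + (y : ℂ) ^ 2 = 1 := by exact_mod_cast congrArg (Complex.ofReal ·) hxy
    have hc' : (x' : ℂ) ^ 2 + (y' : ℂ) ^ 2 = 1 := by exact_mod_cast congrArg (Complex.ofReal ·) hxy'
    have h1 : α₁ * ((x : ℂ) - Complex.I * y) = 1 := by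
      rw [hα₁]; linear_combination hc - (y:ℂ)^2 * Complex.I_sq
    have h1' : α₂ * ((x' : ℂ) - Complex.I * y') = 1 := by
      rw [hα₂]; linear_combination hc' - (y':ℂ)^2 * Complex.I_sq
    have hinv : α₁⁻¹ = (x : ℂ) - Complex.I * y := inv_eq_of_mul_eq_one_right h1
    have hinv' : α₂⁻¹ = (x' : ℂ) - Complex.I * y' := inv_eq_of_mul_eq_one_right h1'
    set d : GL (Fin 4) ℂ := gJ⁻¹ * (g * gJ) with hdDef
    have hd : (d : Matrix (Fin 4) (Fin 4) ℂ)
        = Matrix.diagonal ![α₁, α₂, α₁⁻¹ * 1, α₂⁻¹ * 1] := by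
      have h2 : (d : Matrix (Fin 4) (Fin 4) ℂ)
          = (↑gJ⁻¹ : Matrix (Fin 4) (Fin 4) ℂ) * ((g : Matrix (Fin 4) (Fin 4) ℂ) * gJ) := by
        rw [hdDef]; simp [Units.val_mul, mul_assoc]
      rw [h2, hg, hgJ, RJ_eq, ← mul_assoc, ← hgJ, ← Units.val_mul, inv_mul_cancel,
        Units.val_one, one_mul]
      simp [hinv, hinv']
      intro i; fin_cases i <;> rfl
    have hρd := hw α₁ α₂ 1 d hd
    have hgd : g * gJ = gJ * d := by rw [hdDef, ← mul_assoc, mul_inv_cancel, one_mul]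
    have e1 : (ρ g : V →ₗ[ℂ] V) v = (ρ (g * gJ) : V →ₗ[ℂ] V) w := by
      rw [hv, _root_.map_mul]; simp [Units.val_mul]
    rw [e1, hgd, _root_.map_mul]
    simp only [Units.val_mul, Module.End.mul_apply]
    rw [hρd, LinearMap.map_smul, ← hv]
    simp
  refine ⟨?_, ?_⟩
  · intro x y x' y' hxy hxy' g hg
    refine ⟨claim1 x y x' y' hxy hxy' g hg, ?_⟩
    -- conjugate by N
    set g' : GL (Fin 4) ℂ := gN⁻¹ * (g * gN) with hg'Def
    have hg' : (g' : Matrix (Fin 4) (Fin 4) ℂ)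
        = Rmat ((x' : ℝ) : ℂ) (((-y' : ℝ)) : ℂ) ((x : ℝ) : ℂ) (((-y : ℝ)) : ℂ) := by
      have h2 : (g' : Matrix (Fin 4) (Fin 4) ℂ)
          = (↑gN⁻¹ : Matrix (Fin 4) (Fin 4) ℂ) * ((g : Matrix (Fin 4) (Fin 4) ℂ) * gN) := by
        rw [hg'Def]; simp [Units.val_mul, mul_assoc]
      rw [h2, hg, hgN, RN_eq, ← mul_assoc, ← hgN, ← Units.val_mul, inv_mul_cancel,
        Units.val_one, one_mul]
      push_cast
      rfl
    have key := claim1 x' (-y') x (-y) (by nlinarith) (by nlinarith) g' hg'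
    push_cast at key
    -- rewrite the scalar
    have hc : (x : ℂ) ^ 2 + (y : ℂ) ^ 2 = 1 := by exact_mod_cast congrArg (Complex.ofReal ·) hxy
    have hc' : (x' : ℂ) ^ 2 + (y' : ℂ) ^ 2 = 1 := by exact_mod_cast congrArg (Complex.ofReal ·) hxy'
    have h1 : ((x : ℂ) + Complex.I * y) * ((x : ℂ) + Complex.I * (-y)) = 1 := by
      linear_combination hc - (y:ℂ)^2 * Complex.I_sq
    have h1' : ((x' : ℂ) + Complex.I * y') * ((x' : ℂ) + Complex.I * (-y')) = 1 := by
      linear_combination hc' - (y':ℂ)^2 * Complex.I_sq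
    have hinv : ((x : ℂ) + Complex.I * y)⁻¹ = (x : ℂ) + Complex.I * (-y) :=
      inv_eq_of_mul_eq_one_right h1
    have hinv' : ((x' : ℂ) + Complex.I * y')⁻¹ = (x' : ℂ) + Complex.I * (-y') :=
      inv_eq_of_mul_eq_one_right h1'
    have hsc : ((x' : ℂ) + Complex.I * (-y')) ^ u * ((x : ℂ) + Complex.I * (-y)) ^ u'
        = ((x : ℂ) + Complex.I * y) ^ (-u') * ((x' : ℂ) + Complex.I * y') ^ (-u) := by
      rw [← hinv, ← hinv', _root_.inv_zpow', _root_.inv_zpow']; ring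
    have hgd : g * gN = gN * g' := by rw [hg'Def, ← mul_assoc, mul_inv_cancel, one_mul]
    have e1 : (ρ g : V →ₗ[ℂ] V) vbar = (ρ (g * gN) : V →ₗ[ℂ] V) v := by
      rw [hvbar, _root_.map_mul]; simp [Units.val_mul]
    rw [e1, hgd, _root_.map_mul]
    simp only [Units.val_mul, Module.End.mul_apply]
    rw [key, LinearMap.map_smul, ← hvbar, hsc]
  · intro lam hlam g hg
    have hlne : ((lam : ℂ)) ≠ 0 := by exact_mod_cast ne_of_gt hlam
    have hdiag : (g : Matrix (Fin 4) (Fin 4) ℂ)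
        = Matrix.diagonal ![(lam : ℂ), (lam : ℂ), (lam : ℂ)⁻¹ * (lam : ℂ)^2, (lam : ℂ)⁻¹ * (lam : ℂ)^2] := by
      rw [hg]
      have : (lam : ℂ)⁻¹ * (lam : ℂ)^2 = (lam : ℂ) := by field_simp
      rw [this]
      ext i j
      fin_cases i <;> fin_cases j <;>
        simp [Matrix.diagonal, Matrix.one_apply]
    have hρg := hw (lam : ℂ) (lam : ℂ) ((lam : ℂ)^2) g hdiag
    have hscal : ((lam : ℂ)) ^ u * (lam : ℂ) ^ u' * ((lam : ℂ)^2) ^ m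
        = (lam : ℂ) ^ (u + u' + 2 * m) := by
      rw [sq, mul_zpow, show u + u' + 2*m = u + (u' + (m + m)) by ring,
        zpow_add₀ hlne, zpow_add₀ hlne, zpow_add₀ hlne]
      ring
    rw [hscal] at hρg
    have hcommJ : g * gJ = gJ * g := by
      ext1
      simp only [Units.val_mul, hg]
      rw [Matrix.smul_mul, Matrix.mul_smul, one_mul, mul_one]
    have hcommN : g * gN = gN * g := by
      ext1
      simp only [Units.val_mul, hg]
      rw [Matrix.smul_mul, Matrix.mul_smul, one_mul, mul_one]
    have hvres : (ρ g : V →ₗ[ℂ] V) v = ((lam : ℂ) ^ (u + u' + 2 * m)) • v := by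
      have e1 : (ρ g : V →ₗ[ℂ] V) v = (ρ (g * gJ) : V →ₗ[ℂ] V) w := by
        rw [hv, _root_.map_mul]; simp [Units.val_mul]
      rw [e1, hcommJ, _root_.map_mul]
      simp only [Units.val_mul, Module.End.mul_apply]
      rw [hρg, LinearMap.map_smul, ← hv]
    refine ⟨hvres, ?_⟩
    have e1 : (ρ g : V →ₗ[ℂ] V) vbar = (ρ (g * gN) : V →ₗ[ℂ] V) v := by
      rw [hvbar, _root_.map_mul]; simp [Units.val_mul]
    rw [e1, hcommN, _root_.map_mul]
    simp only [Units.val_mul, Module.End.mul_apply]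
    rw [hvres, LinearMap.map_smul, ← hvbar]
end
end
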